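/- Let p ≥ 2 and let G be a 2p-regular graph with a (p+2)-star colouring f. Then every vertex v of G, say with colour i, has exactly p neighbours in some single colour class V_j and exactly one neighbour in every other colour class V_k with k ∉ {i, j}. -/

import Mathlib

/-- A star colouring: a proper colouring with no bicoloured 4-vertex path. -/
def IsStarColoring {V : Type*} {α : Type*} (G : SimpleGraph V) (f : V → α) : Prop :=
  (∀ ⦃u v : V⦄, G.Adj u v → f u ≠ f v) ∧
  ∀ ⦃a b c d : V⦄, G.Adj a b → G.Adj b c → G.Adj c d →
    a ≠ c → a ≠ d → b ≠ d → ¬(f a = f c ∧ f b = f d)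

open Finset

section Aux

variable {V : Type*} [Fintype V] {n : ℕ} (G : SimpleGraph V) [DecidableRel G.Adj]
  (f : V → Fin n)

/-- number of neighbours of `v` coloured `j` -/
def Dcnt (v : V) (j : Fin n) : ℕ := (univ.filter (fun u => G.Adj v u ∧ f u = j)).card

lemma ncard_eq_Dcnt (v : V) (j : Fin n) :
    {u : V | G.Adj v u ∧ f u = j}.ncard = Dcnt G f v j := by
  rw [show {u : V | G.Adj v u ∧ f u = j}
      = ↑(univ.filter (fun u => G.Adj v u ∧ f u = j)) by ext u; simp,
    Set.ncard_coe_finset, Dcnt]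

lemma sum_Dcnt (v : V) :
    ∑ j, Dcnt G f v j = (univ.filter (fun u => G.Adj v u)).card := by
  rw [Finset.card_eq_sum_card_fiberwise
    (f := f) (t := (univ : Finset (Fin n))) (fun u _ => mem_univ (f u))]
  exact Finset.sum_congr rfl (fun j _ => by rw [Dcnt, ← Finset.filter_filter])

lemma Dcnt_self (hf : IsStarColoring G f) (v : V) : Dcnt G f v (f v) = 0 := by
  rw [Dcnt, Finset.card_eq_zero, Finset.filter_eq_empty_iff]
  rintro u - ⟨hadj, heq⟩
  exact hf.1 hadj heq.symm

lemma one_le_Dcnt {v u : V} (h : G.Adj v u) : 1 ≤ Dcnt G f v (f u) :=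
  Finset.card_pos.mpr ⟨u, by simp [h]⟩

lemma star_L1 (hf : IsStarColoring G f) {v u : V} (hadj : G.Adj v u)
    (h2v : 2 ≤ Dcnt G f v (f u)) : ¬ (2 ≤ Dcnt G f u (f v)) := by
  intro h2u
  obtain ⟨v', hv'mem, hv'ne⟩ := Finset.exists_mem_ne h2v u
  obtain ⟨u', hu'mem, hu'ne⟩ := Finset.exists_mem_ne h2u v
  rw [Finset.mem_filter] at hv'mem hu'mem
  obtain ⟨-, hav', hfv'⟩ := hv'mem
  obtain ⟨-, hau', hfu'⟩ := hu'mem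
  have hne : f v ≠ f u := hf.1 hadj
  refine hf.2 hav'.symm hadj hau' hv'ne ?_ (fun h => hu'ne h.symm) ⟨hfv', hfu'.symm⟩
  intro h
  exact hne (by rw [← hfu', ← h, hfv'])

end Aux

/-- In a (p+2)-star coloured 2p-regular graph (p ≥ 2), every vertex has exactly
p neighbours in one colour class and exactly one neighbour in each other class. -/
theorem stmt7 {V : Type*} [Fintype V] (G : SimpleGraph V) (p : ℕ) (hp : 2 ≤ p)
    (hreg : ∀ v : V, (G.neighborSet v).ncard = 2 * p)
    (f : V → Fin (p + 2)) (hf : IsStarColoring G f) :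
    ∀ v : V, ∃ j : Fin (p + 2), j ≠ f v ∧
      {u : V | G.Adj v u ∧ f u = j}.ncard = p ∧
      ∀ k : Fin (p + 2), k ≠ f v → k ≠ j →
        {u : V | G.Adj v u ∧ f u = k}.ncard = 1 := by
  classical
  letI : DecidableRel G.Adj := Classical.decRel _
  set D : V → Fin (p+2) → ℕ := Dcnt G f with hD
  -- degrees
  have hNbr : ∀ v : V, (univ.filter (fun u => G.Adj v u)).card = 2*p := by
    intro v
    have h := hreg v
    rwa [show G.neighborSet v = ↑(univ.filter (fun u => G.Adj v u)) by
        ext u; simp [SimpleGraph.mem_neighborSet], Set.ncard_coe_finset] at h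
  have hsum : ∀ v : V, ∑ j, D v j = 2*p := by
    intro v; rw [hD, sum_Dcnt, hNbr]
  -- some colour is dominated
  have hT2ne : ∀ v : V, ∃ j, 2 ≤ D v j := by
    intro v
    by_contra hcon
    push_neg at hcon
    have h1 : ∑ j ∈ univ.erase (f v), D v j ≤ ∑ _j ∈ univ.erase (f v), 1 :=
      Finset.sum_le_sum (fun j _ => Nat.lt_succ_iff.mp (hcon j))
    have h2 : (univ.erase (f v)).card = p + 1 := by
      rw [Finset.card_erase_of_mem (mem_univ _), Finset.card_univ, Fintype.card_fin]
      omega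
    rw [Finset.sum_const, smul_eq_mul, mul_one, h2] at h1
    have h0 : D v (f v) = 0 := by rw [hD]; exact Dcnt_self G f hf v
    have h3 := hsum v
    rw [← Finset.add_sum_erase _ _ (mem_univ (f v)), h0] at h3
    omega
  -- the "out" count is at most p
  have hOut : ∀ v : V,
      (univ.filter (fun u => G.Adj v u ∧ ¬ 2 ≤ D v (f u))).card ≤ p := by
    intro v
    obtain ⟨j₂, hj₂⟩ := hT2ne v
    have hj₂v : j₂ ≠ f v := by
      intro h; rw [h, hD, Dcnt_self G f hf] at hj₂; omega
    have himg : ∀ u ∈ univ.filter (fun u => G.Adj v u ∧ ¬ 2 ≤ D v (f u)),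
        f u ∈ (univ.erase (f v)).erase j₂ := by
      intro u hu
      rw [Finset.mem_filter] at hu
      obtain ⟨-, hadj, hnot⟩ := hu
      rw [Finset.mem_erase, Finset.mem_erase]
      refine ⟨?_, (hf.1 hadj).symm, mem_univ _⟩
      intro h; rw [h] at hnot; exact hnot hj₂
    have hinj : Set.InjOn f (univ.filter (fun u => G.Adj v u ∧ ¬ 2 ≤ D v (f u))) := by
      intro u1 h1 u2 h2 heq
      by_contra hne
      simp only [Finset.coe_filter, Set.mem_setOf_eq] at h1 h2
      have : 2 ≤ D v (f u1) := by
        rw [hD, Dcnt]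
        refine Finset.one_lt_card.mpr ⟨u1, ?_, u2, ?_, hne⟩
        · simp [h1.2.1]
        · simp [h2.2.1, ← heq]
      exact h1.2.2 this
    have hcard := Finset.card_le_card_of_injOn f himg hinj
    have : ((univ.erase (f v)).erase j₂).card = p := by
      rw [Finset.card_erase_of_mem (Finset.mem_erase.mpr ⟨hj₂v, mem_univ _⟩),
        Finset.card_erase_of_mem (mem_univ _), Finset.card_univ, Fintype.card_fin]
      omega
    omega
  -- "in" sets
  set Sv : V → Finset V := fun v => univ.filter (fun u => G.Adj v u ∧ 2 ≤ D v (f u))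
    with hSv
  have hpart : ∀ v : V, (Sv v).card
      + (univ.filter (fun u => G.Adj v u ∧ ¬ 2 ≤ D v (f u))).card = 2*p := by
    intro v
    have h := Finset.card_filter_add_card_filter_not
      (s := univ.filter (fun u => G.Adj v u)) (p := fun u => 2 ≤ D v (f u))
    rw [Finset.filter_filter, Finset.filter_filter, hNbr v] at h
    exact h
  have hIn_ge : ∀ v : V, p ≤ (Sv v).card := by
    intro v
    have h := hpart v
    have h2 := hOut v
    omega
  -- global counting
  set S : Finset (V × V) :=
    univ.filter (fun q => G.Adj q.1 q.2 ∧ 2 ≤ D q.1 (f q.2)) with hS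
  set E : Finset (V × V) := univ.filter (fun q => G.Adj q.1 q.2) with hE
  have hEcard : E.card = Fintype.card V * (2*p) := by
    rw [Finset.card_eq_sum_card_fiberwise
      (f := Prod.fst) (t := (univ : Finset V)) (fun q _ => mem_univ q.1)]
    have hfib : ∀ v : V, (E.filter (fun q => q.1 = v)).card = 2*p := by
      intro v
      have : E.filter (fun q => q.1 = v)
          = {v} ×ˢ (univ.filter (fun u => G.Adj v u)) := by
        ext ⟨a, b⟩
        simp only [hE, Finset.mem_filter, Finset.mem_univ, true_and,
          Finset.mem_product, Finset.mem_singleton]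
        constructor
        · rintro ⟨hab, rfl⟩; exact ⟨rfl, hab⟩
        · rintro ⟨rfl, hb⟩; exact ⟨hb, rfl⟩
      rw [this, Finset.card_product, Finset.card_singleton, one_mul, hNbr v]
    rw [Finset.sum_congr rfl (fun v _ => hfib v), Finset.sum_const, smul_eq_mul,
      Finset.card_univ]
  have hScard : S.card = ∑ v, (Sv v).card := by
    rw [Finset.card_eq_sum_card_fiberwise
      (f := Prod.fst) (t := (univ : Finset V)) (fun q _ => mem_univ q.1)]
    refine Finset.sum_congr rfl (fun v _ => ?_)
    have : S.filter (fun q => q.1 = v) = {v} ×ˢ (Sv v) := by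
      ext ⟨a, b⟩
      simp only [hS, hSv, Finset.mem_filter, Finset.mem_univ, true_and,
        Finset.mem_product, Finset.mem_singleton]
      constructor
      · rintro ⟨⟨hab, hd⟩, rfl⟩; exact ⟨rfl, hab, hd⟩
      · rintro ⟨rfl, hb, hd⟩; exact ⟨⟨hb, hd⟩, rfl⟩
    rw [this, Finset.card_product, Finset.card_singleton, one_mul]
  have hdisj : Disjoint S (S.map (Equiv.prodComm V V).toEmbedding) := by
    rw [Finset.disjoint_left]
    rintro ⟨a, b⟩ hq hq'
    rw [Finset.mem_map_equiv] at hq'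
    simp only [hS, Equiv.prodComm_symm, Equiv.prodComm_apply, Prod.swap_prod_mk,
      Finset.mem_filter, Finset.mem_univ, true_and] at hq hq'
    exact star_L1 G f hf hq.1 hq.2 hq'.2
  have hsub1 : S ⊆ E := by
    intro q hq
    rw [hS, Finset.mem_filter] at hq
    rw [hE, Finset.mem_filter]
    exact ⟨hq.1, hq.2.1⟩
  have hsub2 : S.map (Equiv.prodComm V V).toEmbedding ⊆ E := by
    intro q hq
    rw [Finset.mem_map_equiv] at hq
    rw [hS, Finset.mem_filter] at hq
    rw [hE, Finset.mem_filter]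
    refine ⟨mem_univ _, ?_⟩
    have := hq.2.1
    simpa using this.symm
  have h2S : 2 * S.card ≤ E.card := by
    have hu := Finset.card_union_of_disjoint hdisj
    have hle := Finset.card_le_card (Finset.union_subset hsub1 hsub2)
    rw [hu, Finset.card_map] at hle
    omega
  -- each In-count is exactly p
  have hIn_eq : ∀ v : V, (Sv v).card = p := by
    have hle : ∑ v, (Sv v).card ≤ Fintype.card V * p := by
      rw [← hScard]
      have h1 : Fintype.card V * (2*p) = 2 * (Fintype.card V * p) := by ring
      omega
    intro v
    by_contra hne
    have hgt : p < (Sv v).card := lt_of_le_of_ne (hIn_ge v) (Ne.symm hne)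
    have hstrict : ∑ _w : V, p < ∑ w, (Sv w).card :=
      Finset.sum_lt_sum (fun w _ => hIn_ge w) ⟨v, mem_univ v, hgt⟩
    rw [Finset.sum_const, smul_eq_mul, Finset.card_univ] at hstrict
    omega
  -- local analysis at v
  intro v
  obtain ⟨u₀, hu₀⟩ : ∃ u₀, u₀ ∈ Sv v := by
    apply Finset.card_pos.mp
    rw [hIn_eq v]; omega
  simp only [hSv, Finset.mem_filter, Finset.mem_univ, true_and] at hu₀
  obtain ⟨hadj₀, h2j₀⟩ := hu₀
  set j₀ := f u₀ with hj₀def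
  have hj₀ne : j₀ ≠ f v := by
    intro h; rw [h, hD, Dcnt_self G f hf] at h2j₀; omega
  -- T1 : colours seen exactly once
  set T1 : Finset (Fin (p+2)) := univ.filter (fun k => D v k = 1) with hT1
  have hOutEq : (univ.filter (fun u => G.Adj v u ∧ ¬ 2 ≤ D v (f u))).card = p := by
    have := hpart v
    rw [hIn_eq v] at this
    omega
  have hT1ge : p ≤ T1.card := by
    have hle2 : (univ.filter (fun u => G.Adj v u ∧ ¬ 2 ≤ D v (f u))).card ≤ T1.card := by
      apply Finset.card_le_card_of_injOn f
      · intro u hu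
        rw [Finset.mem_coe, Finset.mem_filter] at hu
        obtain ⟨-, hadj, hnot⟩ := hu
        rw [Finset.mem_coe, hT1, Finset.mem_filter]
        have h1 : 1 ≤ D v (f u) := one_le_Dcnt G f hadj
        exact ⟨mem_univ _, by omega⟩
      · intro u1 h1 u2 h2 heq
        by_contra hne
        simp only [Finset.coe_filter, Set.mem_setOf_eq] at h1 h2
        have : 2 ≤ D v (f u1) := by
          rw [hD, Dcnt]
          refine Finset.one_lt_card.mpr ⟨u1, ?_, u2, ?_, hne⟩
          · simp [h1.2.1]
          · simp [h2.2.1, ← heq]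
        exact h1.2.2 this
    omega
  have hj₀T1 : j₀ ∉ T1 := by
    rw [hT1, Finset.mem_filter]
    rintro ⟨-, h⟩
    omega
  have hfvT1 : f v ∉ T1 := by
    rw [hT1, Finset.mem_filter]
    rintro ⟨-, h⟩
    rw [hD, Dcnt_self G f hf] at h
    omega
  have hT1sub : T1 ⊆ (univ.erase (f v)).erase j₀ := by
    intro k hk
    rw [Finset.mem_erase, Finset.mem_erase]
    refine ⟨?_, ?_, mem_univ _⟩
    · intro h; rw [h] at hk; exact hj₀T1 hk
    · intro h; rw [h] at hk; exact hfvT1 hk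
  have hEEcard : ((univ.erase (f v)).erase j₀).card = p := by
    rw [Finset.card_erase_of_mem (Finset.mem_erase.mpr ⟨hj₀ne, mem_univ _⟩),
      Finset.card_erase_of_mem (mem_univ _),
      Finset.card_univ, Fintype.card_fin]
    omega
  have hT1eq : T1 = (univ.erase (f v)).erase j₀ :=
    Finset.eq_of_subset_of_card_le hT1sub (by omega)
  -- every k ∉ {f v, j₀} has exactly one neighbour
  have hone : ∀ k : Fin (p+2), k ≠ f v → k ≠ j₀ → D v k = 1 := by
    intro k hk1 hk2
    have : k ∈ T1 := by
      rw [hT1eq, Finset.mem_erase, Finset.mem_erase]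
      exact ⟨hk2, hk1, mem_univ _⟩
    rw [hT1, Finset.mem_filter] at this
    exact this.2
  -- D v j₀ = p
  have hDj₀ : D v j₀ = p := by
    have hsplit1 : D v (f v) + ∑ k ∈ univ.erase (f v), D v k = 2*p := by
      rw [Finset.add_sum_erase _ _ (mem_univ (f v)), hsum v]
    have hj₀mem : j₀ ∈ univ.erase (f v) := Finset.mem_erase.mpr ⟨hj₀ne, mem_univ _⟩
    have hsplit2 : D v j₀ + ∑ k ∈ (univ.erase (f v)).erase j₀, D v k
        = ∑ k ∈ univ.erase (f v), D v k :=
      Finset.add_sum_erase _ _ hj₀mem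
    have hrest : ∑ k ∈ (univ.erase (f v)).erase j₀, D v k = p := by
      rw [← hT1eq]
      calc ∑ k ∈ T1, D v k = ∑ _k ∈ T1, 1 := by
            refine Finset.sum_congr rfl (fun k hk => ?_)
            rw [hT1, Finset.mem_filter] at hk
            exact hk.2
        _ = T1.card := by rw [Finset.sum_const, smul_eq_mul, mul_one]
        _ = p := by rw [hT1eq]; exact hEEcard
    have h0 : D v (f v) = 0 := by rw [hD, Dcnt_self G f hf]
    omega
  refine ⟨j₀, hj₀ne, ?_, ?_⟩
  · rw [show {u : V | G.Adj v u ∧ f u = j₀}.ncard = D v j₀ from ncard_eq_Dcnt G f v j₀]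
    exact hDj₀
  · intro k hk1 hk2
    rw [show {u : V | G.Adj v u ∧ f u = k}.ncard = D v k from ncard_eq_Dcnt G f v k]
    exact hone k hk1 hk2
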